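/- arXiv:2403.02300 — 3 statements merged into one kernel-verified Lean document; each statement's English description precedes it below -/
import Mathlib

section
/- Let ε ∈ ℝ, T, U ⊆ ℝ measurable, δ = P_{y∼N(0,1)}[y ∈ U], Z = E_{x∼N(ε,1)}[1 − δ·1{x ∈ T}] > 0, and A(x,y) = φ(x−ε)φ(y)·1{(x,y) ∉ T×U}/Z. Let k be a positive integer and suppose: (i) for all integers 1 ≤ s ≤ k, E_{y∼N(0,1)}[y^s | y ∉ U] = E_{y∼N(0,1)}[y^s]; and (ii) for all integers 0 ≤ t ≤ k, E_{x∼N(ε,1)}[x^t (1 − δ·1{x∈T})]/Z = E_{x∼N(0,1)}[x^t]. Then for all nonnegative integers t, s with t + s ≤ k, the moment E_{(x,y)∼A}[x^t y^s] equals E_{x∼N(0,1)}[x^t]·E_{y∼N(0,1)}[y^s]. -/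
open MeasureTheory Real

noncomputable def gaussPDF (z : ℝ) : ℝ := (Real.sqrt (2 * Real.pi))⁻¹ * Real.exp (-z ^ 2 / 2)

lemma gauss_rw (s : ℕ) : (fun y : ℝ => y ^ s * gaussPDF y)
    = fun y : ℝ => (Real.sqrt (2 * Real.pi))⁻¹ * (y ^ s * Real.exp (-(1/2 : ℝ) * y ^ 2)) := by
  funext y
  unfold gaussPDF
  ring_nf

lemma gauss_integrable (s : ℕ) : Integrable (fun y : ℝ => y ^ s * gaussPDF y) := by
  rw [gauss_rw]
  have h := integrable_rpow_mul_exp_neg_mul_sq (b := (1:ℝ)/2) (by norm_num)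
    (s := (s : ℝ)) ((neg_lt_zero.mpr one_pos).trans_le (Nat.cast_nonneg s))
  simp_rw [Real.rpow_natCast] at h
  exact h.const_mul _

lemma gauss_total : (∫ y : ℝ, gaussPDF y) = 1 := by
  have h0 : (∫ y : ℝ, gaussPDF y) = ∫ y : ℝ, y ^ 0 * gaussPDF y := by
    simp
  rw [h0, gauss_rw, integral_const_mul]
  simp only [pow_zero, one_mul]
  rw [integral_gaussian]
  have h2π : (0:ℝ) < 2 * Real.pi := by positivity
  rw [show Real.pi / (1/2 : ℝ) = 2 * Real.pi by ring]
  exact inv_mul_cancel₀ (Real.sqrt_ne_zero'.2 h2π)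

theorem stmt_4 (ε : ℝ) (T U : Set ℝ) (hT : MeasurableSet T) (hU : MeasurableSet U)
    (δ : ℝ) (hδdef : δ = ∫ y in U, gaussPDF y) (hδ0 : 0 < δ) (hδ1 : δ < 1)
    (Z : ℝ) (hZdef : Z = ∫ x, gaussPDF (x - ε) * (1 - δ * T.indicator 1 x))
    (hZ : 0 < Z) (k : ℕ) (hk : 0 < k)
    (h1 : ∀ s : ℕ, 1 ≤ s → s ≤ k →
      (∫ y in Uᶜ, y ^ s * gaussPDF y) / (1 - δ) = ∫ y, y ^ s * gaussPDF y)
    (h2 : ∀ t : ℕ, t ≤ k →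
      (∫ x, x ^ t * (gaussPDF (x - ε) * (1 - δ * T.indicator 1 x))) / Z
        = ∫ x, x ^ t * gaussPDF x) :
    ∀ t s : ℕ, t + s ≤ k →
      (∫ x : ℝ, ∫ y : ℝ,
        x ^ t * y ^ s *
          (gaussPDF (x - ε) * gaussPDF y * ((T ×ˢ U)ᶜ).indicator 1 (x, y) / Z))
      = (∫ x, x ^ t * gaussPDF x) * (∫ y, y ^ s * gaussPDF y) := by
  intro t s hts
  set Ms := ∫ y : ℝ, y ^ s * gaussPDF y with hMs
  have hInt : Integrable (fun y : ℝ => y ^ s * gaussPDF y) := gauss_integrable s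
  have hVs : (∫ y in U, y ^ s * gaussPDF y) = δ * Ms := by
    rcases Nat.eq_zero_or_pos s with hs | hs
    · subst hs
      have : Ms = 1 := by
        rw [hMs]; simpa using gauss_total
      simp only [pow_zero, one_mul, this, mul_one]
      exact hδdef.symm
    · have hk' : s ≤ k := le_trans (Nat.le_add_left s t) hts
      have h := h1 s hs hk'
      have h1δ : (1:ℝ) - δ ≠ 0 := by linarith
      rw [div_eq_iff h1δ] at h
      have hsplit : (∫ y in U, y ^ s * gaussPDF y) + (∫ y in Uᶜ, y ^ s * gaussPDF y) = Ms :=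
        integral_add_compl hU hInt
      rw [h] at hsplit
      linarith [hsplit]
  have hinner : ∀ x : ℝ, (∫ y : ℝ, x ^ t * y ^ s *
        (gaussPDF (x - ε) * gaussPDF y * ((T ×ˢ U)ᶜ).indicator 1 (x, y) / Z))
      = (x ^ t * (gaussPDF (x - ε) * (1 - δ * T.indicator 1 x))) * (Ms / Z) := by
    intro x
    have heq : (fun y : ℝ => x ^ t * y ^ s *
        (gaussPDF (x - ε) * gaussPDF y * ((T ×ˢ U)ᶜ).indicator 1 (x, y) / Z))
        = fun y : ℝ => (x ^ t * gaussPDF (x - ε) / Z) * (y ^ s * gaussPDF y)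
          - (x ^ t * gaussPDF (x - ε) / Z * T.indicator 1 x) *
              (U.indicator (fun y : ℝ => y ^ s * gaussPDF y) y) := by
      funext y
      have hind : ((T ×ˢ U)ᶜ).indicator (1 : ℝ × ℝ → ℝ) (x, y)
          = 1 - T.indicator 1 x * U.indicator 1 y := by
        by_cases hx : x ∈ T <;> by_cases hy : y ∈ U <;>
          simp [Set.indicator_apply, hx, hy, Set.mem_prod]
      rw [hind]
      by_cases hy : y ∈ U <;> by_cases hx : x ∈ T <;>
        simp [Set.indicator_apply, hy, hx] <;> ring
    rw [heq, integral_sub ((hInt.const_mul _)) ((hInt.indicator hU).const_mul _),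
      integral_const_mul, integral_const_mul, integral_indicator hU, hVs, ← hMs]
    by_cases hx : x ∈ T <;>
      simp [Set.indicator_apply, hx] <;> ring
  simp_rw [hinner]
  rw [integral_mul_const]
  have h2' := h2 t (le_trans (Nat.le_add_right t s) hts)
  rw [div_eq_iff hZ.ne'] at h2'
  rw [h2', mul_assoc, mul_comm Z (Ms / Z), div_mul_cancel₀ Ms hZ.ne']
end

section
/- Let k be a positive integer, D a continuous distribution on ℝ with finite moments up to order k−1, and ν₀,…,ν_{k−1} ∈ ℝ. Suppose that for every η > 0 there exists an at most (k+1)-piecewise constant function g_η: ℝ → {±1} with |E_{z∼D}[g_η(z) z^t] − ν_t| ≤ η for all nonnegative integers t < k. Then there exists an at most (k+1)-piecewise constant function f: ℝ → {±1} with E_{z∼D}[f(z) z^t] = ν_t exactly, for all nonnegative integers t < k. -/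
open MeasureTheory Real

/-- `f` is a piecewise constant function on `ℝ` with at most `m` pieces. -/
def PiecewiseConst (m : ℕ) (f : ℝ → ℝ) : Prop :=
  ∃ b : Fin (m + 1) → EReal, Monotone b ∧ b 0 = ⊥ ∧ b (Fin.last m) = ⊤ ∧
    ∀ i : Fin m, ∀ x y : ℝ,
      b i.castSucc < (x : EReal) → (x : EReal) < b i.succ →
      b i.castSucc < (y : EReal) → (y : EReal) < b i.succ → f x = f y

namespace Stmt12Aux

lemma pi_half_lt_two : π / 2 < 2 := by
  have := Real.pi_lt_d2; linarith

noncomputable def phiE : EReal → ℝ := fun c =>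
  if c = ⊥ then -2 else if c = ⊤ then 2 else arctan c.toReal

lemma phiE_coe (x : ℝ) : phiE (x : EReal) = arctan x := by
  simp [phiE, EReal.coe_ne_bot, EReal.coe_ne_top]

lemma phiE_bot : phiE ⊥ = -2 := by simp [phiE]

lemma phiE_top : phiE ⊤ = 2 := by simp [phiE]

lemma phiE_mem (c : EReal) : -2 ≤ phiE c ∧ phiE c ≤ 2 := by
  have hpi := pi_half_lt_two
  induction c using EReal.rec with
  | bot => rw [phiE_bot]; norm_num
  | coe x =>
      rw [phiE_coe]
      constructor
      · nlinarith [neg_pi_div_two_lt_arctan x]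
      · nlinarith [arctan_lt_pi_div_two x]
  | top => rw [phiE_top]; norm_num

lemma phiE_lt_iff (c : EReal) (z : ℝ) : phiE c < arctan z ↔ c < (z : EReal) := by
  have hpi := pi_half_lt_two
  induction c using EReal.rec with
  | bot =>
      rw [phiE_bot]
      refine ⟨fun _ => EReal.bot_lt_coe z, fun _ => ?_⟩
      nlinarith [neg_pi_div_two_lt_arctan z]
  | coe x =>
      rw [phiE_coe, EReal.coe_lt_coe_iff]
      exact ⟨fun h => arctan_strictMono.lt_iff_lt.mp h, fun h => arctan_strictMono h⟩
  | top =>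
      rw [phiE_top]
      constructor
      · intro h; nlinarith [arctan_lt_pi_div_two z]
      · intro h; exact absurd h (by simp)

lemma lt_phiE_iff (c : EReal) (z : ℝ) : arctan z < phiE c ↔ (z : EReal) < c := by
  have hpi := pi_half_lt_two
  induction c using EReal.rec with
  | bot =>
      rw [phiE_bot]
      constructor
      · intro h; nlinarith [neg_pi_div_two_lt_arctan z]
      · intro h; exact absurd h (by simp)
  | coe x =>
      rw [phiE_coe, EReal.coe_lt_coe_iff]
      exact ⟨fun h => arctan_strictMono.lt_iff_lt.mp h, fun h => arctan_strictMono h⟩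
  | top =>
      rw [phiE_top]
      refine ⟨fun _ => EReal.coe_lt_top z, fun _ => ?_⟩
      nlinarith [arctan_lt_pi_div_two z]

lemma phiE_mono : Monotone phiE := by
  intro c d hcd
  induction c using EReal.rec with
  | bot => rw [phiE_bot]; exact (phiE_mem d).1
  | coe x =>
      induction d using EReal.rec with
      | bot => exact absurd hcd (by simp)
      | coe y =>
          rw [phiE_coe, phiE_coe]
          exact arctan_strictMono.monotone (EReal.coe_le_coe_iff.mp hcd)
      | top => rw [phiE_top]; exact (phiE_mem _).2
  | top =>
      rw [top_le_iff.mp hcd, phiE_top]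

noncomputable def psiE : ℝ → EReal := fun y =>
  if y ≤ -(π/2) then ⊥ else if π/2 ≤ y then ⊤ else ((tan y : ℝ) : EReal)

lemma tan_lt_iff_lt_arctan {y : ℝ} (h1 : -(π/2) < y) (h2 : y < π/2) (z : ℝ) :
    tan y < z ↔ y < arctan z := by
  constructor
  · intro hc
    have := arctan_strictMono hc
    rwa [arctan_tan h1 h2] at this
  · intro hc
    have := Real.strictMonoOn_tan ⟨h1, h2⟩
      ⟨neg_pi_div_two_lt_arctan z, arctan_lt_pi_div_two z⟩ hc
    rwa [tan_arctan] at this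

lemma lt_tan_iff_arctan_lt {y : ℝ} (h1 : -(π/2) < y) (h2 : y < π/2) (z : ℝ) :
    z < tan y ↔ arctan z < y := by
  constructor
  · intro hc
    have := arctan_strictMono hc
    rwa [arctan_tan h1 h2] at this
  · intro hc
    have := Real.strictMonoOn_tan
      ⟨neg_pi_div_two_lt_arctan z, arctan_lt_pi_div_two z⟩ ⟨h1, h2⟩ hc
    rwa [tan_arctan] at this

lemma psiE_lt_iff (y z : ℝ) : psiE y < (z : EReal) ↔ y < arctan z := by
  unfold psiE
  split_ifs with h1 h2
  · simp only [EReal.bot_lt_coe, true_iff]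
    exact lt_of_le_of_lt h1 (neg_pi_div_two_lt_arctan z)
  · constructor
    · intro hc; exact absurd hc (by simp)
    · intro hc; exact absurd (hc.trans (arctan_lt_pi_div_two z)) (not_lt.mpr h2)
  · push_neg at h1 h2
    rw [EReal.coe_lt_coe_iff]
    exact tan_lt_iff_lt_arctan h1 h2 z

lemma lt_psiE_iff (y z : ℝ) : (z : EReal) < psiE y ↔ arctan z < y := by
  unfold psiE
  split_ifs with h1 h2
  · constructor
    · intro hc; exact absurd hc (by simp)
    · intro hc; exact absurd ((neg_pi_div_two_lt_arctan z).trans hc) (not_lt.mpr h1)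
  · simp only [EReal.coe_lt_top, true_iff]
    exact lt_of_lt_of_le (arctan_lt_pi_div_two z) h2
  · push_neg at h1 h2
    rw [EReal.coe_lt_coe_iff]
    exact lt_tan_iff_arctan_lt h1 h2 z

lemma psiE_mono : Monotone psiE := by
  intro y1 y2 h
  by_cases a1 : y1 ≤ -(π/2)
  · rw [psiE, if_pos a1]; exact bot_le
  by_cases a2 : π/2 ≤ y1
  · have b2 : π/2 ≤ y2 := a2.trans h
    rw [psiE, if_neg a1, if_pos a2, psiE,
      if_neg (by push_neg at a1 ⊢; linarith [Real.pi_pos]), if_pos b2]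
  · push_neg at a1 a2
    rw [psiE, if_neg (not_le.mpr a1), if_neg (not_le.mpr a2)]
    by_cases b1 : y2 ≤ -(π/2)
    · linarith
    by_cases b2 : π/2 ≤ y2
    · rw [psiE, if_neg b1, if_pos b2]; exact le_top
    · push_neg at b1 b2
      rw [psiE, if_neg (not_le.mpr b1), if_neg (not_le.mpr b2), EReal.coe_le_coe_iff]
      rcases eq_or_lt_of_le h with rfl | h
      · exact le_rfl
      · exact (Real.strictMonoOn_tan ⟨a1, a2⟩ ⟨b1, b2⟩ h).le

lemma exists_piece {k : ℕ} {a : Fin (k+2) → ℝ} {c : ℝ}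
    (h0 : a 0 < c) (hl : c < a (Fin.last (k+1))) (hne : ∀ i, a i ≠ c) :
    ∃ i : Fin (k+1), a i.castSucc < c ∧ c < a i.succ := by
  classical
  set T : Finset (Fin (k+2)) := Finset.univ.filter (fun j => a j < c) with hT
  have hne0 : T.Nonempty := ⟨0, by simp [hT, h0]⟩
  set j := T.max' hne0 with hj
  have hjT : j ∈ T := T.max'_mem hne0
  have hjc : a j < c := by simpa [hT] using hjT
  have hjlast : j ≠ Fin.last (k+1) := by
    intro hh; rw [hh] at hjc; exact absurd hjc (not_lt.mpr hl.le)
  have hjval : (j : ℕ) < k + 1 := by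
    have := j.isLt
    rcases lt_or_eq_of_le (Nat.lt_succ_iff.mp this) with hlt | heq
    · exact hlt
    · exact absurd (Fin.ext heq) hjlast
  refine ⟨⟨(j : ℕ), hjval⟩, ?_, ?_⟩
  · have : Fin.castSucc ⟨(j : ℕ), hjval⟩ = j := by
      apply Fin.ext; simp
    rw [this]; exact hjc
  · set i : Fin (k+1) := ⟨(j : ℕ), hjval⟩
    have hnotin : i.succ ∉ T := by
      intro hmem
      have := T.le_max' i.succ hmem
      rw [← hj] at this
      have : (i.succ : ℕ) ≤ (j : ℕ) := this
      simp [i, Fin.val_succ] at this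
    have : ¬ a i.succ < c := by simpa [hT] using hnotin
    exact lt_of_le_of_ne (not_lt.mp this) (Ne.symm (hne i.succ))

lemma unique_piece {k : ℕ} {a : Fin (k+2) → ℝ} (ha : Monotone a) {c : ℝ}
    {i j : Fin (k+1)} (hi : a i.castSucc < c ∧ c < a i.succ)
    (hj : a j.castSucc < c ∧ c < a j.succ) : i = j := by
  by_contra hne
  have key : ∀ {i j : Fin (k+1)}, i < j → a i.castSucc < c ∧ c < a i.succ →
      a j.castSucc < c ∧ c < a j.succ → False := by
    intro i j hlt hi hj
    have : i.succ ≤ j.castSucc := by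
      rw [Fin.le_def]; simp [Fin.val_succ]
      exact hlt
    exact absurd (hi.2.trans ((ha this).trans_lt hj.1)) (lt_irrefl c)
  rcases lt_or_gt_of_ne hne with hlt | hgt
  · exact key hlt hi hj
  · exact key hgt hj hi

noncomputable def stepFn (k : ℕ) (a : Fin (k+2) → ℝ) (s : Fin (k+1) → ℝ) (z : ℝ) : ℝ :=
  if h : ∃ i : Fin (k+1), a i.castSucc < arctan z ∧ arctan z < a i.succ then s h.choose else 1

noncomputable def SFn (k : ℕ) (a : Fin (k+2) → ℝ) (s : Fin (k+1) → ℝ) (z : ℝ) : ℝ :=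
  ∑ i : Fin (k+1),
    Set.indicator {w : ℝ | a i.castSucc < arctan w ∧ arctan w < a i.succ} (fun _ => s i) z

lemma measurable_SFn (k : ℕ) (a : Fin (k+2) → ℝ) (s : Fin (k+1) → ℝ) :
    Measurable (SFn k a s) := by
  apply Finset.measurable_sum
  intro i _
  apply Measurable.indicator measurable_const
  have : {w : ℝ | a i.castSucc < arctan w ∧ arctan w < a i.succ}
      = arctan ⁻¹' (Set.Ioo (a i.castSucc) (a i.succ)) := rfl
  rw [this]
  exact measurableSet_Ioo.preimage Real.continuous_arctan.measurable

lemma stepFn_piece {k : ℕ} {a : Fin (k+2) → ℝ} (ha : Monotone a) {s : Fin (k+1) → ℝ}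
    {i : Fin (k+1)} {z : ℝ} (hz : a i.castSucc < arctan z ∧ arctan z < a i.succ) :
    stepFn k a s z = s i := by
  have h : ∃ i : Fin (k+1), a i.castSucc < arctan z ∧ arctan z < a i.succ := ⟨i, hz⟩
  rw [stepFn, dif_pos h]
  exact congrArg s (unique_piece ha h.choose_spec hz)

lemma SFn_piece {k : ℕ} {a : Fin (k+2) → ℝ} (ha : Monotone a) {s : Fin (k+1) → ℝ}
    {i : Fin (k+1)} {z : ℝ} (hz : a i.castSucc < arctan z ∧ arctan z < a i.succ) :
    SFn k a s z = s i := by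
  rw [SFn]
  rw [Finset.sum_eq_single i]
  · have hmem : z ∈ {w : ℝ | a i.castSucc < arctan w ∧ arctan w < a i.succ} := hz
    rw [Set.indicator_of_mem hmem]
  · intro j _ hji
    apply Set.indicator_of_notMem
    intro hmem
    exact hji (unique_piece ha hmem hz)
  · intro hh; exact absurd (Finset.mem_univ i) hh

lemma abs_SFn_le {k : ℕ} {a : Fin (k+2) → ℝ} (ha : Monotone a) {s : Fin (k+1) → ℝ}
    (hs : ∀ i, |s i| ≤ 1) (z : ℝ) : |SFn k a s z| ≤ 1 := by
  by_cases h : ∃ i : Fin (k+1), a i.castSucc < arctan z ∧ arctan z < a i.succ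
  · obtain ⟨i, hi⟩ := h
    rw [SFn_piece ha hi]; exact hs i
  · push_neg at h
    have : SFn k a s z = 0 := by
      rw [SFn]
      apply Finset.sum_eq_zero
      intro i _
      apply Set.indicator_of_notMem
      intro hmem
      exact absurd hmem.2 (not_lt.mpr (h i hmem.1))
    rw [this]; norm_num

lemma ae_ne_bad {k : ℕ} (a : Fin (k+2) → ℝ) :
    ∀ᵐ z : ℝ, ∀ i : Fin (k+2), arctan z ≠ a i := by
  rw [ae_all_iff]
  intro i
  have hsub : {z : ℝ | arctan z = a i}.Subsingleton :=
    fun x hx y hy => arctan_injective (hx.trans hy.symm)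
  have h0 : volume {z : ℝ | arctan z = a i} = 0 :=
    Set.Subsingleton.measure_zero hsub _
  rw [ae_iff]
  simpa using h0

lemma neg_two_lt_arctan (z : ℝ) : -2 < arctan z := by
  nlinarith [neg_pi_div_two_lt_arctan z, pi_half_lt_two]

lemma arctan_lt_two (z : ℝ) : arctan z < 2 := by
  nlinarith [arctan_lt_pi_div_two z, pi_half_lt_two]

lemma stepFn_ae_SFn {k : ℕ} {a : Fin (k+2) → ℝ} (ha : Monotone a)
    (h0 : a 0 = -2) (hl : a (Fin.last (k+1)) = 2) (s : Fin (k+1) → ℝ) :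
    stepFn k a s =ᵐ[volume] SFn k a s := by
  filter_upwards [ae_ne_bad a] with z hz
  obtain ⟨i, hi⟩ := exists_piece (a := a) (c := arctan z)
    (by rw [h0]; exact neg_two_lt_arctan z) (by rw [hl]; exact arctan_lt_two z)
    (fun i => (hz i).symm)
  rw [stepFn_piece ha hi, SFn_piece ha hi]

lemma extract {k : ℕ} {g : ℝ → ℝ} (hg : PiecewiseConst (k+1) g)
    (hval : ∀ z, g z = 1 ∨ g z = -1) :
    ∃ (a : Fin (k+2) → ℝ) (s : Fin (k+1) → ℝ), Monotone a ∧ a 0 = -2 ∧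
      a (Fin.last (k+1)) = 2 ∧ (∀ i, s i = 1 ∨ s i = -1) ∧
      g =ᵐ[volume] SFn k a s := by
  classical
  obtain ⟨b, hbmono, hb0, hblast, hbc⟩ := hg
  refine ⟨phiE ∘ b, fun i =>
    if h : ∃ x : ℝ, b i.castSucc < (x : EReal) ∧ (x : EReal) < b i.succ
    then g h.choose else 1, phiE_mono.comp hbmono, ?_, ?_, ?_, ?_⟩
  · show phiE (b 0) = -2
    rw [hb0, phiE_bot]
  · show phiE (b (Fin.last (k+1))) = 2
    rw [hblast, phiE_top]
  · intro i
    dsimp only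
    by_cases h : ∃ x : ℝ, b i.castSucc < (x : EReal) ∧ (x : EReal) < b i.succ
    · rw [dif_pos h]; exact hval _
    · rw [dif_neg h]; left; rfl
  · filter_upwards [ae_ne_bad (phiE ∘ b)] with z hz
    obtain ⟨i, hi⟩ := exists_piece (a := phiE ∘ b) (c := arctan z)
      (by show phiE (b 0) < arctan z; rw [hb0, phiE_bot]; exact neg_two_lt_arctan z)
      (by show arctan z < phiE (b (Fin.last (k+1))); rw [hblast, phiE_top]; exact arctan_lt_two z)
      (fun i => (hz i).symm)
    have hbl : b i.castSucc < (z : EReal) := (phiE_lt_iff _ z).mp hi.1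
    have hbr : (z : EReal) < b i.succ := (lt_phiE_iff _ z).mp hi.2
    have hex : ∃ x : ℝ, b i.castSucc < (x : EReal) ∧ (x : EReal) < b i.succ := ⟨z, hbl, hbr⟩
    rw [SFn_piece (phiE_mono.comp hbmono) hi, dif_pos hex]
    exact hbc i z hex.choose hbl hbr hex.choose_spec.1 hex.choose_spec.2

end Stmt12Aux

open Stmt12Aux

theorem stmt_12 (k : ℕ) (hk : 0 < k) (p : ℝ → ℝ)
    (hp_cont : Continuous p) (hp_nonneg : ∀ z, 0 ≤ p z) (hp_mass : ∫ z, p z = 1)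
    (hp_mom : ∀ t : ℕ, t < k → Integrable (fun z : ℝ => z ^ t * p z))
    (ν : ℕ → ℝ)
    (h : ∀ η : ℝ, 0 < η → ∃ g : ℝ → ℝ, PiecewiseConst (k + 1) g ∧
      (∀ z, g z = 1 ∨ g z = -1) ∧
      ∀ t : ℕ, t < k → |(∫ z, g z * z ^ t * p z) - ν t| ≤ η) :
    ∃ f : ℝ → ℝ, PiecewiseConst (k + 1) f ∧ (∀ z, f z = 1 ∨ f z = -1) ∧
      ∀ t : ℕ, t < k → (∫ z, f z * z ^ t * p z) = ν t := by
  classical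
  have hseq : ∀ n : ℕ, ∃ g : ℝ → ℝ, PiecewiseConst (k + 1) g ∧
      (∀ z, g z = 1 ∨ g z = -1) ∧
      ∀ t : ℕ, t < k → |(∫ z, g z * z ^ t * p z) - ν t| ≤ 1 / (n + 1) :=
    fun n => h (1 / (n + 1)) (by positivity)
  choose g hg1 hg2 hg3 using hseq
  choose a s hamono ha0 halast hsval haeq using fun n => extract (hg1 n) (hg2 n)
  have habs : ∀ n i, |s n i| ≤ 1 := by
    intro n i; rcases hsval n i with hh | hh <;> rw [hh] <;> norm_num
  -- compactness
  set K : Set ((Fin (k+2) → ℝ) × (Fin (k+1) → ℝ)) :=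
    (Set.univ.pi fun _ : Fin (k+2) => Set.Icc (-2:ℝ) 2) ×ˢ
      (Set.univ.pi fun _ : Fin (k+1) => Set.Icc (-1:ℝ) 1) with hK
  have hKcomp : IsCompact K :=
    (isCompact_univ_pi fun _ => isCompact_Icc).prod (isCompact_univ_pi fun _ => isCompact_Icc)
  have hmem : ∀ n, ((a n, s n) : (Fin (k+2) → ℝ) × (Fin (k+1) → ℝ)) ∈ K := by
    intro n
    constructor
    · intro i _
      refine ⟨?_, ?_⟩
      · rw [← ha0 n]; exact hamono n (Fin.zero_le i)
      · rw [← halast n]; exact hamono n (Fin.le_last i)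
    · intro i _
      exact abs_le.mp (habs n i)
  obtain ⟨L, hLmem, φ, hφmono, hφtend⟩ := hKcomp.tendsto_subseq hmem
  have htendA : ∀ i : Fin (k+2), Filter.Tendsto (fun n => a (φ n) i) Filter.atTop (nhds (L.1 i)) :=
    fun i => (((continuous_apply i).comp continuous_fst).continuousAt.tendsto).comp hφtend
  have htendS : ∀ i : Fin (k+1), Filter.Tendsto (fun n => s (φ n) i) Filter.atTop (nhds (L.2 i)) :=
    fun i => (((continuous_apply i).comp continuous_snd).continuousAt.tendsto).comp hφtend
  have hAmono : Monotone L.1 := by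
    intro i j hij
    exact le_of_tendsto_of_tendsto' (htendA i) (htendA j) (fun n => hamono (φ n) hij)
  have hA0 : L.1 0 = -2 := by
    have h1 : Filter.Tendsto (fun n => a (φ n) 0) Filter.atTop (nhds (-2)) := by
      have : (fun n => a (φ n) 0) = fun _ => (-2 : ℝ) := funext fun n => ha0 (φ n)
      rw [this]; exact tendsto_const_nhds
    exact tendsto_nhds_unique (htendA 0) h1
  have hAlast : L.1 (Fin.last (k+1)) = 2 := by
    have h1 : Filter.Tendsto (fun n => a (φ n) (Fin.last (k+1))) Filter.atTop (nhds 2) := by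
      have : (fun n => a (φ n) (Fin.last (k+1))) = fun _ => (2 : ℝ) := funext fun n => halast (φ n)
      rw [this]; exact tendsto_const_nhds
    exact tendsto_nhds_unique (htendA _) h1
  have hSval : ∀ i, L.2 i = 1 ∨ L.2 i = -1 := by
    intro i
    have hC : IsClosed ({1, -1} : Set ℝ) := (Set.toFinite _).isClosed
    have hmem2 : L.2 i ∈ ({1, -1} : Set ℝ) := by
      apply hC.mem_of_tendsto (htendS i)
      filter_upwards with n
      rcases hsval (φ n) i with hh | hh <;> rw [hh] <;> simp
    simpa using hmem2
  -- moments of the limit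
  have hmom : ∀ t : ℕ, t < k →
      (∫ z, SFn k L.1 L.2 z * (z ^ t * p z)) = ν t := by
    intro t ht
    set w : ℝ → ℝ := fun z => z ^ t * p z with hw
    have hwint : Integrable w := hp_mom t ht
    have hwmeas : Measurable w := ((continuous_pow t).mul hp_cont).measurable
    -- DCT
    have limit1 : Filter.Tendsto (fun n => ∫ z, SFn k (a (φ n)) (s (φ n)) z * w z)
        Filter.atTop (nhds (∫ z, SFn k L.1 L.2 z * w z)) := by
      apply MeasureTheory.tendsto_integral_of_dominated_convergence (fun z => |w z|)
      · intro n
        exact ((measurable_SFn k (a (φ n)) (s (φ n))).mul hwmeas).aestronglyMeasurable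
      · exact hwint.abs
      · intro n
        filter_upwards with z
        have h1 : |SFn k (a (φ n)) (s (φ n)) z| ≤ 1 :=
          abs_SFn_le (hamono (φ n)) (habs (φ n)) z
        rw [Real.norm_eq_abs, abs_mul]
        nlinarith [abs_nonneg (w z), abs_nonneg (SFn k (a (φ n)) (s (φ n)) z)]
      · filter_upwards [ae_ne_bad L.1] with z hz
        obtain ⟨i, hi⟩ := exists_piece (a := L.1) (c := arctan z)
          (by rw [hA0]; exact neg_two_lt_arctan z)
          (by rw [hAlast]; exact arctan_lt_two z)
          (fun i => (hz i).symm)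
        have hev : ∀ᶠ n in Filter.atTop,
            SFn k (a (φ n)) (s (φ n)) z * w z = s (φ n) i * w z := by
          have h1 := (htendA i.castSucc).eventually_lt_const hi.1
          have h2 := (htendA i.succ).eventually_const_lt hi.2
          filter_upwards [h1, h2] with n hn1 hn2
          rw [SFn_piece (hamono (φ n)) ⟨hn1, hn2⟩]
        rw [SFn_piece hAmono hi]
        apply Filter.Tendsto.congr' _ ((htendS i).mul tendsto_const_nhds)
        filter_upwards [hev] with n hn
        exact hn.symm
    -- the same sequence tends to ν t
    have heq : ∀ n, (∫ z, SFn k (a n) (s n) z * w z) = ∫ z, g n z * z ^ t * p z := by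
      intro n
      apply integral_congr_ae
      filter_upwards [haeq n] with z hz
      rw [← hz, hw]; ring
    have limit2 : Filter.Tendsto (fun n => ∫ z, SFn k (a (φ n)) (s (φ n)) z * w z)
        Filter.atTop (nhds (ν t)) := by
      rw [← tendsto_sub_nhds_zero_iff]
      refine squeeze_zero_norm (fun n => ?_) tendsto_one_div_add_atTop_nhds_zero_nat
      · rw [heq (φ n), Real.norm_eq_abs]
        calc |(∫ z, g (φ n) z * z ^ t * p z) - ν t| ≤ 1 / (φ n + 1) := hg3 (φ n) t ht
          _ ≤ 1 / (n + 1) := by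
              apply one_div_le_one_div_of_le
              · positivity
              · have : (n : ℝ) ≤ φ n := by exact_mod_cast hφmono.le_apply
                linarith
    exact tendsto_nhds_unique limit1 limit2
  -- construct f
  refine ⟨stepFn k L.1 L.2, ?_, ?_, ?_⟩
  · refine ⟨psiE ∘ L.1, psiE_mono.comp hAmono, ?_, ?_, ?_⟩
    · show psiE (L.1 0) = ⊥
      rw [hA0, psiE, if_pos (by linarith [pi_half_lt_two])]
    · show psiE (L.1 (Fin.last (k+1))) = ⊤
      rw [hAlast, psiE, if_neg (by linarith [Real.pi_pos]), if_pos pi_half_lt_two.le]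
    · intro i x y hx1 hx2 hy1 hy2
      have hxa : L.1 i.castSucc < arctan x ∧ arctan x < L.1 i.succ :=
        ⟨(psiE_lt_iff _ x).mp hx1, (lt_psiE_iff _ x).mp hx2⟩
      have hya : L.1 i.castSucc < arctan y ∧ arctan y < L.1 i.succ :=
        ⟨(psiE_lt_iff _ y).mp hy1, (lt_psiE_iff _ y).mp hy2⟩
      rw [stepFn_piece hAmono hxa, stepFn_piece hAmono hya]
  · intro z
    rw [stepFn]
    by_cases hh : ∃ i : Fin (k+1), L.1 i.castSucc < arctan z ∧ arctan z < L.1 i.succ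
    · rw [dif_pos hh]; exact hSval _
    · rw [dif_neg hh]; left; rfl
  · intro t ht
    rw [← hmom t ht]
    apply integral_congr_ae
    filter_upwards [stepFn_ae_SFn hAmono hA0 hAlast L.2] with z hz
    rw [hz]; ring
end

section
/- Let D₀ be a fixed distribution, 𝒟 a family of distributions, and suppose there exist s distributions D₁,…,D_s ∈ 𝒟 that are (γ,β)-correlated relative to D₀, i.e., |χ_{D₀}(D_i, D_j)| ≤ γ for i ≠ j and ≤ β for i = j. Then for any γ' > 0, any SQ algorithm that distinguishes D₀ from 𝒟 (decision problem ℬ(𝒟, D₀)) either makes at least s·γ'/(β−γ) queries or makes some query to STAT(τ) with τ ≤ √(γ + γ'). -/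
open MeasureTheory Real
open scoped BigOperators

set_option maxHeartbeats 1600000 in
/-- SQ lower bound from pairwise correlations (adversarial form):
if `D 1, …, D s` are `(γ, β)`-correlated densities relative to the null density `D0`
(all relative to Lebesgue measure on `ℝᵈ`), and an algorithm asks fewer than
`s * γ' / (β - γ)` statistical queries, each bounded by 1 in absolute value and each
answered within tolerance `τ ≥ √(γ + γ')`, then there is some alternative
distribution `D i` all of whose query answers are within `τ` of those of `D0`;
hence the algorithm cannot distinguish `D0` from the family. -/
theorem stmt_16 (dim s q : ℕ) (γ β γ' τ : ℝ) (hγ : 0 ≤ γ) (hγβ : γ < β) (hγ' : 0 < γ')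
    (D0 : (Fin dim → ℝ) → ℝ) (D : Fin s → (Fin dim → ℝ) → ℝ)
    (hD0_pos : ∀ x, 0 < D0 x) (hD0_meas : Measurable D0) (hD0_mass : ∫ x, D0 x = 1)
    (hD_nonneg : ∀ i x, 0 ≤ D i x) (hD_meas : ∀ i, Measurable (D i))
    (hD_mass : ∀ i, ∫ x, D i x = 1)
    (hInt : ∀ i j, Integrable (fun x => D i x * D j x / D0 x))
    (hcross : ∀ i j, i ≠ j → |(∫ x, D i x * D j x / D0 x) - 1| ≤ γ)
    (hdiag : ∀ i, |(∫ x, D i x * D i x / D0 x) - 1| ≤ β)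
    (F : Fin q → (Fin dim → ℝ) → ℝ)
    (hF_meas : ∀ j, Measurable (F j)) (hF_bdd : ∀ j x, |F j x| ≤ 1)
    (hτ : Real.sqrt (γ + γ') ≤ τ)
    (hq : (q : ℝ) < (s : ℝ) * γ' / (β - γ)) :
    ∃ i : Fin s, ∀ j : Fin q,
      |(∫ x, F j x * D i x) - (∫ x, F j x * D0 x)| ≤ τ := by
  have hβγ : (0:ℝ) < β - γ := by linarith
  have hτ0 : 0 ≤ τ := le_trans (Real.sqrt_nonneg _) hτ
  have hτ2 : γ + γ' ≤ τ ^ 2 := by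
    have := Real.sq_sqrt (by linarith : (0:ℝ) ≤ γ + γ')
    nlinarith [Real.sqrt_nonneg (γ + γ')]
  -- basic integrability
  have hD0_int : Integrable D0 := by
    by_contra h
    rw [integral_undef h] at hD0_mass; norm_num at hD0_mass
  have hD_int : ∀ i, Integrable (D i) := by
    intro i
    by_contra h
    have := hD_mass i
    rw [integral_undef h] at this; norm_num at this
  have hFD_int : ∀ j i, Integrable (fun x => F j x * D i x) := by
    intro j i
    refine (hD_int i).mono' ((hF_meas j).mul (hD_meas i)).aestronglyMeasurable ?_
    filter_upwards with x
    rw [Real.norm_eq_abs, abs_mul]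
    calc |F j x| * |D i x| ≤ 1 * |D i x| := by
          exact mul_le_mul_of_nonneg_right (hF_bdd j x) (abs_nonneg _)
      _ = |D i x| := one_mul _
      _ = D i x := abs_of_nonneg (hD_nonneg i x)
  have hFD0_int : ∀ j, Integrable (fun x => F j x * D0 x) := by
    intro j
    refine hD0_int.mono' ((hF_meas j).mul hD0_meas).aestronglyMeasurable ?_
    filter_upwards with x
    rw [Real.norm_eq_abs, abs_mul]
    calc |F j x| * |D0 x| ≤ 1 * |D0 x| := by
          exact mul_le_mul_of_nonneg_right (hF_bdd j x) (abs_nonneg _)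
      _ = |D0 x| := one_mul _
      _ = D0 x := abs_of_nonneg (hD0_pos x).le
  -- the correlation kernel
  have hKer_eq : ∀ i i' : Fin s, (fun x => (D i x - D0 x) * (D i' x - D0 x) / D0 x)
      = fun x => D i x * D i' x / D0 x - D i x - D i' x + D0 x := by
    intro i i'
    funext x
    have h0 : D0 x ≠ 0 := (hD0_pos x).ne'
    field_simp
    ring
  have hKer_int : ∀ i i', Integrable (fun x => (D i x - D0 x) * (D i' x - D0 x) / D0 x) := by
    intro i i'
    rw [hKer_eq i i']
    exact (((hInt i i').sub (hD_int i)).sub (hD_int i')).add hD0_int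
  have hKer_val : ∀ i i', (∫ x, (D i x - D0 x) * (D i' x - D0 x) / D0 x)
      = (∫ x, D i x * D i' x / D0 x) - 1 := by
    intro i i'
    rw [hKer_eq i i']
    have h1 : Integrable (fun x => D i x * D i' x / D0 x - D i x) :=
      (hInt i i').sub (hD_int i)
    have h2 : Integrable (fun x => D i x * D i' x / D0 x - D i x - D i' x) :=
      h1.sub (hD_int i')
    rw [integral_add h2 hD0_int, integral_sub h1 (hD_int i'),
      integral_sub (hInt i i') (hD_int i), hD_mass, hD_mass, hD0_mass]
    ring
  -- deviations and bad sets
  set d : Fin q → Fin s → ℝ :=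
    fun j i => (∫ x, F j x * D i x) - ∫ x, F j x * D0 x with hd
  set B : Fin q → Finset (Fin s) :=
    fun j => Finset.univ.filter (fun i => τ < |d j i|) with hB
  -- key bound on each bad set
  have key : ∀ j, ((B j).card : ℝ) < (β - γ) / γ' := by
    intro j
    rcases Finset.eq_empty_or_nonempty (B j) with hBe | hBne
    · rw [hBe]; simp; positivity
    set n : ℕ := (B j).card with hn
    have hn1 : 1 ≤ n := Finset.card_pos.mpr hBne
    set ε : Fin s → ℝ := fun i => if 0 ≤ d j i then 1 else -1 with hε
    have hεd : ∀ i, ε i * d j i = |d j i| := by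
      intro i
      by_cases h : 0 ≤ d j i
      · simp [hε, h, abs_of_nonneg h]
      · simp [hε, h, abs_of_neg (lt_of_not_ge h)]
    have hεabs : ∀ i, |ε i| = 1 := by
      intro i
      by_cases h : 0 ≤ d j i <;> simp [hε, h]
    set S : (Fin dim → ℝ) → ℝ :=
      fun x => ∑ i ∈ B j, ε i * (D i x - D0 x) with hS
    have hS_int : Integrable S := by
      refine integrable_finset_sum _ fun i _ => ?_
      exact ((hD_int i).sub hD0_int).const_mul _
    have hSabs_int : Integrable (fun x => |S x|) := hS_int.abs
    -- pointwise expansion of S^2 / D0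
    have hS2eq : (fun x => S x ^ 2 / D0 x) = fun x => ∑ i ∈ B j, ∑ i' ∈ B j,
        ε i * ε i' * ((D i x - D0 x) * (D i' x - D0 x) / D0 x) := by
      funext x
      rw [sq, hS, Finset.sum_mul_sum, Finset.sum_div]
      refine Finset.sum_congr rfl fun i _ => ?_
      rw [Finset.sum_div]
      refine Finset.sum_congr rfl fun i' _ => ?_
      ring
    have hS2_int : Integrable (fun x => S x ^ 2 / D0 x) := by
      rw [hS2eq]
      exact integrable_finset_sum _ fun i _ =>
        integrable_finset_sum _ fun i' _ => (hKer_int i i').const_mul _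
    have hS2_val : (∫ x, S x ^ 2 / D0 x)
        = ∑ i ∈ B j, ∑ i' ∈ B j, ε i * ε i' * ((∫ x, D i x * D i' x / D0 x) - 1) := by
      rw [hS2eq, integral_finset_sum _ fun i _ =>
        integrable_finset_sum _ fun i' _ => (hKer_int i i').const_mul _]
      refine Finset.sum_congr rfl fun i _ => ?_
      rw [integral_finset_sum _ fun i' _ => (hKer_int i i').const_mul _]
      refine Finset.sum_congr rfl fun i' _ => ?_
      rw [integral_const_mul, hKer_val]
    -- bound the double sum
    have hS2_bd : (∫ x, S x ^ 2 / D0 x) ≤ n * β + n^2 * γ - n * γ := by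
      rw [hS2_val]
      have hterm : ∀ i ∈ B j, ∀ i' ∈ B j,
          ε i * ε i' * ((∫ x, D i x * D i' x / D0 x) - 1)
            ≤ if i' = i then β else γ := by
        intro i _ i' _
        have h1 : ε i * ε i' * ((∫ x, D i x * D i' x / D0 x) - 1)
            ≤ |(∫ x, D i x * D i' x / D0 x) - 1| := by
          calc ε i * ε i' * ((∫ x, D i x * D i' x / D0 x) - 1)
              ≤ |ε i * ε i' * ((∫ x, D i x * D i' x / D0 x) - 1)| := le_abs_self _
            _ = |(∫ x, D i x * D i' x / D0 x) - 1| := by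
                rw [abs_mul, abs_mul, hεabs, hεabs]; ring
        by_cases h : i' = i
        · subst h; simpa using h1.trans (hdiag i')
        · simpa [h] using h1.trans (hcross i i' (fun hh => h hh.symm))
      calc (∑ i ∈ B j, ∑ i' ∈ B j, ε i * ε i' * ((∫ x, D i x * D i' x / D0 x) - 1))
          ≤ ∑ i ∈ B j, ∑ i' ∈ B j, (if i' = i then β else γ) := by
            refine Finset.sum_le_sum fun i hi => Finset.sum_le_sum fun i' hi' =>
              hterm i hi i' hi'
        _ = ∑ i ∈ B j, (β + (n - 1) * γ) := by
            refine Finset.sum_congr rfl fun i hi => ?_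
            have : (∑ i' ∈ B j, (if i' = i then β else γ))
                = ∑ i' ∈ B j, (γ + if i' = i then β - γ else 0) := by
              refine Finset.sum_congr rfl fun i' _ => ?_
              by_cases h : i' = i <;> simp [h]
            rw [this, Finset.sum_add_distrib, Finset.sum_const,
              Finset.sum_ite_eq' (B j) i (fun _ => β - γ)]
            simp [hi, ← hn]
            ring
        _ = n * (β + (n - 1) * γ) := by rw [Finset.sum_const, ← hn]; ring
        _ = n * β + n^2 * γ - n * γ := by ring
    -- the integral of F j * S is large
    have hFS_eq : (fun x => F j x * S x)
        = fun x => ∑ i ∈ B j, ε i * (F j x * D i x - F j x * D0 x) := by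
      funext x
      rw [hS, Finset.mul_sum]
      refine Finset.sum_congr rfl fun i _ => ?_
      ring
    have hsub : ∀ i : Fin s, Integrable (fun x => F j x * D i x - F j x * D0 x) :=
      fun i => (hFD_int j i).sub (hFD0_int j)
    have hFS_int : Integrable (fun x => F j x * S x) := by
      rw [hFS_eq]
      exact integrable_finset_sum _ fun i _ => (hsub i).const_mul _
    have hFS_val : (∫ x, F j x * S x) = ∑ i ∈ B j, |d j i| := by
      rw [hFS_eq, integral_finset_sum _ fun i _ => (hsub i).const_mul _]
      refine Finset.sum_congr rfl fun i _ => ?_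
      rw [integral_const_mul, integral_sub (hFD_int j i) (hFD0_int j), ← hεd i, hd]
    have hFS_big : (n : ℝ) * τ < ∫ x, F j x * S x := by
      rw [hFS_val]
      have : ∑ i ∈ B j, τ < ∑ i ∈ B j, |d j i| := by
        refine Finset.sum_lt_sum_of_nonempty hBne fun i hi => ?_
        exact (Finset.mem_filter.mp hi).2
      simpa [Finset.sum_const, ← hn, nsmul_eq_mul] using this
    -- |∫ F S| ≤ ∫ |S|
    set c : ℝ := ∫ x, |S x| with hc
    have hc0 : 0 ≤ c := integral_nonneg fun x => abs_nonneg _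
    have hFS_le : (∫ x, F j x * S x) ≤ c := by
      calc (∫ x, F j x * S x) ≤ |∫ x, F j x * S x| := le_abs_self _
        _ ≤ ∫ x, |F j x * S x| := by
            have := norm_integral_le_integral_norm (μ := volume) (fun x => F j x * S x)
            simpa [Real.norm_eq_abs, abs_mul] using this
        _ ≤ ∫ x, |S x| := by
            refine integral_mono hFS_int.abs hSabs_int fun x => ?_
            rw [abs_mul]
            calc |F j x| * |S x| ≤ 1 * |S x| :=
                mul_le_mul_of_nonneg_right (hF_bdd j x) (abs_nonneg _)
              _ = |S x| := one_mul _
    -- Cauchy-Schwarz via the variance trick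
    have hCS : c ^ 2 ≤ ∫ x, S x ^ 2 / D0 x := by
      have h0 : 0 ≤ ∫ x, (|S x| - c * D0 x) ^ 2 / D0 x :=
        integral_nonneg fun x => div_nonneg (sq_nonneg _) (hD0_pos x).le
      have hexp : (fun x => (|S x| - c * D0 x) ^ 2 / D0 x)
          = fun x => S x ^ 2 / D0 x - 2 * c * |S x| + c ^ 2 * D0 x := by
        funext x
        have h0x : D0 x ≠ 0 := (hD0_pos x).ne'
        field_simp
        ring_nf
        rw [sq_abs]
        ring
      rw [hexp] at h0
      have h1 : Integrable (fun x => 2 * c * |S x|) := hSabs_int.const_mul _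
      have h2 : Integrable (fun x => S x ^ 2 / D0 x - 2 * c * |S x|) := hS2_int.sub h1
      have h3 : Integrable (fun x => c ^ 2 * D0 x) := hD0_int.const_mul _
      rw [integral_add h2 h3, integral_sub hS2_int h1, integral_const_mul,
        integral_const_mul, hD0_mass, ← hc] at h0
      nlinarith
    -- combine
    have hnτ : (0:ℝ) ≤ (n:ℝ) * τ := mul_nonneg (Nat.cast_nonneg n) hτ0
    have hsq : ((n:ℝ) * τ)^2 < c^2 := by
      have h1 : (n:ℝ) * τ < c := lt_of_lt_of_le hFS_big hFS_le
      nlinarith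
    have hfin : ((n:ℝ))^2 * τ^2 < (n:ℝ) * β + (n:ℝ)^2 * γ - (n:ℝ) * γ := by
      nlinarith
    have hn1' : (1:ℝ) ≤ (n:ℝ) := by exact_mod_cast hn1
    rw [lt_div_iff₀ hγ']
    nlinarith
  -- counting
  set U : Finset (Fin s) := Finset.univ.biUnion B with hU
  have hcard : ((U.card : ℝ)) < s := by
    have h1 : (U.card : ℝ) ≤ ∑ j : Fin q, ((B j).card : ℝ) := by
      have := Finset.card_biUnion_le (s := (Finset.univ : Finset (Fin q))) (t := B)
      calc (U.card : ℝ) ≤ ((∑ j : Fin q, (B j).card : ℕ) : ℝ) := by exact_mod_cast this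
        _ = ∑ j : Fin q, ((B j).card : ℝ) := by push_cast; ring
    have h2 : ∑ j : Fin q, ((B j).card : ℝ) ≤ (q : ℝ) * ((β - γ) / γ') := by
      calc ∑ j : Fin q, ((B j).card : ℝ) ≤ ∑ _j : Fin q, ((β - γ) / γ') :=
            Finset.sum_le_sum fun j _ => (key j).le
        _ = (q : ℝ) * ((β - γ) / γ') := by
            rw [Finset.sum_const, Finset.card_univ, Fintype.card_fin, nsmul_eq_mul]
    have h3 : (q : ℝ) * ((β - γ) / γ') < s := by
      rw [lt_div_iff₀ hβγ] at hq
      rw [← mul_div_assoc, div_lt_iff₀ hγ']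
      linarith
    linarith
  have hUne : U ≠ Finset.univ := by
    intro h
    rw [h, Finset.card_univ, Fintype.card_fin] at hcard
    exact lt_irrefl _ hcard
  obtain ⟨i, -, hiU⟩ := Finset.exists_of_ssubset
    (ssubset_of_subset_of_ne (Finset.subset_univ U) hUne)
  refine ⟨i, fun j => ?_⟩
  by_contra h
  push_neg at h
  exact hiU (Finset.mem_biUnion.mpr ⟨j, Finset.mem_univ j,
    Finset.mem_filter.mpr ⟨Finset.mem_univ i, h⟩⟩)
end
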